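/- Let T₁,…,Tₙ ⊆ ℝ be finite sets each of size q ≥ 2, and let B = T₁ × ⋯ × Tₙ ⊆ ℝ^n. If A ⊆ B is an s-distance set, then |A| ≤ |{(α₁,…,αₙ) ∈ ℕ^n : 0 ≤ αᵢ ≤ q−1 for all i, and ∑ᵢ αᵢ ≤ s}|. -/

import Mathlib

noncomputable section

/-- The set of nonzero distances determined by a set `A` in Euclidean space. -/
def distSet {n : ℕ} (A : Set (EuclideanSpace ℝ (Fin n))) : Set ℝ :=
  {d | ∃ p ∈ A, ∃ q ∈ A, p ≠ q ∧ dist p q = d}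

namespace SdistAux

variable {n : ℕ}

abbrev E (n : ℕ) := EuclideanSpace ℝ (Fin n)

/-- monomial evaluation -/
def mon (β : Fin n → ℕ) : E n → ℝ := fun x => ∏ i, x i ^ β i

def uu : E n → ℝ := fun x => ∑ i, x i ^ 2

/-- span of monomials of total degree ≤ k -/
def Rk (n k : ℕ) : Submodule ℝ (E n → ℝ) :=
  Submodule.span ℝ {f | ∃ β : Fin n → ℕ, (∑ i, β i) ≤ k ∧ f = mon β}

lemma Rk_mono {k k' : ℕ} (h : k ≤ k') : Rk n k ≤ Rk n k' := by
  apply Submodule.span_mono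
  rintro f ⟨β, hβ, rfl⟩
  exact ⟨β, hβ.trans h, rfl⟩

lemma mon_mem_Rk {β : Fin n → ℕ} {k : ℕ} (h : (∑ i, β i) ≤ k) : mon β ∈ Rk n k :=
  Submodule.subset_span ⟨β, h, rfl⟩

lemma mon_mul_mon (β γ : Fin n → ℕ) : mon β * mon γ = mon (β + γ) := by
  funext x
  simp only [mon, Pi.mul_apply, Pi.add_apply, pow_add, ← Finset.prod_mul_distrib]

lemma Rk_mul {f g : E n → ℝ} {j k : ℕ} (hf : f ∈ Rk n j) (hg : g ∈ Rk n k) :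
    f * g ∈ Rk n (j + k) := by
  induction hf using Submodule.span_induction with
  | mem f hf =>
    obtain ⟨β, hβ, rfl⟩ := hf
    induction hg using Submodule.span_induction with
    | mem g hg =>
      obtain ⟨γ, hγ, rfl⟩ := hg
      rw [mon_mul_mon]
      exact mon_mem_Rk (by simp only [Pi.add_apply]; rw [Finset.sum_add_distrib]; omega)
    | zero => rw [mul_zero]; exact Submodule.zero_mem _
    | add g g' _ _ h1 h2 => rw [mul_add]; exact Submodule.add_mem _ h1 h2
    | smul r g _ h1 => rw [mul_smul_comm]; exact Submodule.smul_mem _ _ h1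
  | zero => rw [zero_mul]; exact Submodule.zero_mem _
  | add f f' _ _ h1 h2 => rw [add_mul]; exact Submodule.add_mem _ h1 h2
  | smul r f _ h1 => rw [smul_mul_assoc]; exact Submodule.smul_mem _ _ h1

lemma uu_mem : (uu : E n → ℝ) ∈ Rk n 2 := by
  have : (uu : E n → ℝ) = ∑ i : Fin n, mon (Pi.single i 2) := by
    funext x
    simp only [uu, Finset.sum_apply]
    refine Finset.sum_congr rfl fun i _ => ?_
    simp only [mon]
    rw [Finset.prod_eq_single i (fun j _ hj => by simp [Pi.single_eq_of_ne hj])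
      (by simp)]
    simp
  rw [this]
  exact Submodule.sum_mem _ fun i _ => mon_mem_Rk (by simp)

lemma uu_pow_mem (p : ℕ) : (uu : E n → ℝ) ^ p ∈ Rk n (2 * p) := by
  induction p with
  | zero =>
    simp only [pow_zero, Nat.mul_zero]
    have : (1 : E n → ℝ) = mon (0 : Fin n → ℕ) := by
      funext x; simp [mon]
    rw [this]; exact mon_mem_Rk (by simp)
  | succ p ih =>
    rw [pow_succ]
    have h2 : 2 * (p + 1) = 2 * p + 2 := by ring
    rw [h2]
    exact Rk_mul ih uu_mem

/-- symmetric kernel generators -/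
def gen (δ : Fin n → ℕ) (p r : ℕ) : E n → E n → ℝ := fun x y =>
  (mon δ x * uu x ^ p) * (mon δ y * uu y ^ r) + (mon δ y * uu y ^ p) * (mon δ x * uu x ^ r)

def Hk (n t : ℕ) : Submodule ℝ (E n → E n → ℝ) :=
  Submodule.span ℝ {F | ∃ δ : Fin n → ℕ, ∃ p r : ℕ, (∑ i, δ i) + p + r ≤ t ∧ F = gen δ p r}

lemma Hk_mono {t t' : ℕ} (h : t ≤ t') : Hk n t ≤ Hk n t' := by
  apply Submodule.span_mono
  rintro F ⟨δ, p, r, hδ, rfl⟩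
  exact ⟨δ, p, r, hδ.trans h, rfl⟩

lemma gen_mem_Hk {δ : Fin n → ℕ} {p r t : ℕ} (h : (∑ i, δ i) + p + r ≤ t) :
    gen δ p r ∈ Hk n t := Submodule.subset_span ⟨δ, p, r, h, rfl⟩

def factor (d : ℝ) : E n → E n → ℝ := fun x y => d ^ 2 - ∑ i, (x i - y i) ^ 2

lemma mon_add_single (δ : Fin n → ℕ) (i : Fin n) (x : E n) :
    mon (δ + Pi.single i 1) x = mon δ x * x i := by
  rw [← mon_mul_mon]
  simp only [mon, Pi.mul_apply]
  congr 1
  rw [Finset.prod_eq_single i (fun j _ hj => by simp [Pi.single_eq_of_ne hj]) (by simp)]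
  simp

lemma factor_eq (d : ℝ) (x y : E n) :
    factor d x y = d ^ 2 - uu x - uu y + 2 * ∑ i, x i * y i := by
  simp only [factor, uu]
  have : ∀ i ∈ Finset.univ, (x i - y i) ^ 2 = (x i ^ 2 + y i ^ 2) - 2 * (x i * y i) :=
    fun i _ => by ring
  rw [Finset.sum_congr rfl this, Finset.sum_sub_distrib, Finset.sum_add_distrib,
    ← Finset.mul_sum]
  ring

lemma factor_mul_gen (d : ℝ) (δ : Fin n → ℕ) (p r : ℕ) :
    factor d * gen δ p r =
      d ^ 2 • gen δ p r - gen δ (p + 1) r - gen δ p (r + 1)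
        + ∑ i : Fin n, (2 : ℝ) • gen (δ + Pi.single i 1) p r := by
  funext x y
  have hgen : ∀ i : Fin n, gen (δ + Pi.single i 1) p r x y = (x i * y i) * gen δ p r x y := by
    intro i
    simp only [gen, mon_add_single]
    ring
  simp only [Pi.mul_apply, Pi.add_apply, Pi.sub_apply, Pi.smul_apply, Finset.sum_apply,
    smul_eq_mul]
  have hsum : (2 : ℝ) * (∑ i, x i * y i) * gen δ p r x y
      = ∑ i : Fin n, 2 * (x i * y i * gen δ p r x y) := by
    rw [Finset.mul_sum, Finset.sum_mul]
    exact Finset.sum_congr rfl fun i _ => by ring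
  rw [Finset.sum_congr rfl (fun i _ => by rw [hgen i]), ← hsum, factor_eq]
  simp only [gen, pow_succ]
  ring

lemma prod_factor_mem (D : Finset ℝ) :
    (∏ d ∈ D, (factor d : E n → E n → ℝ)) ∈ Hk n D.card := by
  induction D using Finset.induction_on with
  | empty =>
    simp only [Finset.prod_empty, Finset.card_empty]
    have h1 : (1 : E n → E n → ℝ) = (2⁻¹ : ℝ) • gen 0 0 0 := by
      funext x y
      simp [gen, mon]
      norm_num
    rw [h1]
    exact Submodule.smul_mem _ _ (gen_mem_Hk (by simp))
  | insert _ _ hd ih =>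
    rename_i d D'
    rw [Finset.prod_insert hd, Finset.card_insert_of_notMem hd]
    have key : ∀ F ∈ Hk n D'.card, factor d * F ∈ Hk n (D'.card + 1) := by
      intro F hF
      induction hF using Submodule.span_induction with
      | mem F hF =>
        obtain ⟨δ, p, r, hδ, rfl⟩ := hF
        rw [factor_mul_gen]
        refine Submodule.add_mem _ (Submodule.sub_mem _ (Submodule.sub_mem _
          (Submodule.smul_mem _ _ (gen_mem_Hk (by omega)))
          (gen_mem_Hk (by omega))) (gen_mem_Hk (by omega)))
          (Submodule.sum_mem _ fun i _ => Submodule.smul_mem _ _ (gen_mem_Hk ?_))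
        have : (∑ j, (δ + Pi.single i 1 : Fin n → ℕ) j) = (∑ j, δ j) + 1 := by
          simp only [Pi.add_apply]
          rw [Finset.sum_add_distrib]
          simp
        omega
      | zero => rw [mul_zero]; exact Submodule.zero_mem _
      | add F G _ _ h1 h2 => rw [mul_add]; exact Submodule.add_mem _ h1 h2
      | smul r F _ h1 => rw [mul_smul_comm]; exact Submodule.smul_mem _ _ h1
    exact key _ ih


lemma ev_mon_eq_zero {n q s : ℕ} (hq : 2 ≤ q) (T : Fin n → Finset ℝ)
    (hT : ∀ i, (T i).card = q)
    (A : Finset (EuclideanSpace ℝ (Fin n)))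
    (hbox : ∀ a ∈ A, ∀ i, a i ∈ T i) (c : ↥A → ℝ)
    (hc : ∀ α : Fin n → Fin q, (∑ i, (α i : ℕ)) ≤ s →
      ∑ a : ↥A, c a * mon (fun i => (α i : ℕ)) ↑a = 0) :
    ∀ N (β : Fin n → ℕ), (∑ i, β i) ≤ s → (∑ i, β i) ≤ N →
      ∑ a : ↥A, c a * mon β ↑a = 0 := by
  classical
  intro N
  induction N using Nat.strong_induction_on with
  | _ N ih =>
    intro β hβs hβN
    by_cases hcap : ∀ i, β i < q
    · have := hc (fun i => ⟨β i, hcap i⟩) (by simpa using hβs)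
      simpa using this
    · push_neg at hcap
      obtain ⟨i, hi⟩ := hcap
      -- q ≤ β i
      set P : Polynomial ℝ := ∏ t ∈ T i, (Polynomial.X - Polynomial.C t) with hP
      have hPm : P.Monic :=
        Polynomial.monic_prod_of_monic _ _ fun t _ => Polynomial.monic_X_sub_C t
      have hPd : P.natDegree = q := by
        rw [hP, Polynomial.natDegree_prod _ _ (fun t _ => Polynomial.X_sub_C_ne_zero t)]
        simp [Polynomial.natDegree_X_sub_C, hT i]
      have hpow : ∀ a : ↥A, ((a : EuclideanSpace ℝ (Fin n)) i) ^ q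
          = ∑ j ∈ Finset.range q, (-(P.coeff j)) * ((a : EuclideanSpace ℝ (Fin n)) i) ^ j := by
        intro a
        have h0 : P.eval ((a : EuclideanSpace ℝ (Fin n)) i) = 0 := by
          rw [hP, Polynomial.eval_prod]
          exact Finset.prod_eq_zero (hbox a a.2 i) (by simp)
        have hexp : P.eval ((a : EuclideanSpace ℝ (Fin n)) i)
            = ((a : EuclideanSpace ℝ (Fin n)) i) ^ q
              + ∑ j ∈ Finset.range q, P.coeff j * ((a : EuclideanSpace ℝ (Fin n)) i) ^ j := by
          rw [Polynomial.eval_eq_sum_range, hPd, Finset.sum_range_succ, ← hPd,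
            hPm.coeff_natDegree, hPd, one_mul, add_comm]
        rw [hexp] at h0
        have hneg : ∑ j ∈ Finset.range q, (-(P.coeff j)) * ((a : EuclideanSpace ℝ (Fin n)) i) ^ j
            = -∑ j ∈ Finset.range q, P.coeff j * ((a : EuclideanSpace ℝ (Fin n)) i) ^ j := by
          simp [neg_mul]
        rw [hneg]
        linarith
      have hsplit : ∀ a : ↥A, ∀ m : ℕ,
          mon (Function.update β i m) (↑a : EuclideanSpace ℝ (Fin n))
          = ((a : EuclideanSpace ℝ (Fin n)) i) ^ m
            * ∏ j ∈ Finset.univ.erase i, ((a : EuclideanSpace ℝ (Fin n)) j) ^ β j := by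
        intro a m
        rw [mon, ← Finset.mul_prod_erase Finset.univ _ (Finset.mem_univ i),
          Function.update_self]
        congr 1
        exact Finset.prod_congr rfl fun j hj =>
          by rw [Function.update_of_ne (Finset.ne_of_mem_erase hj)]
      have hm : ∀ a : ↥A, mon β ↑a = ∑ j ∈ Finset.range q,
          (-(P.coeff j)) * mon (Function.update β i (β i - q + j)) ↑a := by
        intro a
        have h1 : mon β ↑a = (((a : EuclideanSpace ℝ (Fin n)) i) ^ (β i - q)
            * ∑ j ∈ Finset.range q, (-(P.coeff j)) * ((a : EuclideanSpace ℝ (Fin n)) i) ^ j)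
            * ∏ j ∈ Finset.univ.erase i, ((a : EuclideanSpace ℝ (Fin n)) j) ^ β j := by
          rw [mon, ← Finset.mul_prod_erase Finset.univ _ (Finset.mem_univ i), ← hpow a,
            ← pow_add]
          congr 2
          omega
        rw [h1, Finset.mul_sum, Finset.sum_mul]
        refine Finset.sum_congr rfl fun j _ => ?_
        rw [hsplit a (β i - q + j), pow_add]
        ring
      have hupd : ∀ j, (∑ k, Function.update β i (β i - q + j) k)
          = (β i - q + j) + ∑ k ∈ Finset.univ.erase i, β k := fun j => by
        rw [Finset.erase_eq]
        exact Finset.sum_update_of_mem (Finset.mem_univ i) _ _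
      have hβsplit : (∑ k, β k) = β i + ∑ k ∈ Finset.univ.erase i, β k :=
        (Finset.add_sum_erase Finset.univ β (Finset.mem_univ i)).symm
      calc ∑ a : ↥A, c a * mon β ↑a
          = ∑ a : ↥A, ∑ j ∈ Finset.range q,
              (-(P.coeff j)) * (c a * mon (Function.update β i (β i - q + j)) ↑a) := by
            refine Finset.sum_congr rfl fun a _ => ?_
            rw [hm a, Finset.mul_sum]
            exact Finset.sum_congr rfl fun j _ => by ring
        _ = ∑ j ∈ Finset.range q, ∑ a : ↥A,
              (-(P.coeff j)) * (c a * mon (Function.update β i (β i - q + j)) ↑a) :=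
            Finset.sum_comm
        _ = 0 := by
            refine Finset.sum_eq_zero fun j hj => ?_
            have hj' : j < q := Finset.mem_range.mp hj
            rw [← Finset.mul_sum,
              ih ((∑ k, β k) - 1) (by omega) _ (by rw [hupd j]; omega)
                (by rw [hupd j]; omega), mul_zero]

end SdistAux

open SdistAux in
theorem sdist_in_box {n s q : ℕ} (hq : 2 ≤ q) (T : Fin n → Finset ℝ)
    (hT : ∀ i, (T i).card = q)
    (A : Finset (EuclideanSpace ℝ (Fin n)))
    (hbox : ∀ a ∈ A, ∀ i, a i ∈ T i)
    (hA : (distSet (A : Set (EuclideanSpace ℝ (Fin n)))).ncard ≤ s) :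
    A.card ≤ (Finset.univ.filter
      (fun α : Fin n → Fin q => ∑ i, (α i : ℕ) ≤ s)).card := by
  classical
  set S := Finset.univ.filter (fun α : Fin n → Fin q => ∑ i, (α i : ℕ) ≤ s) with hS
  -- the distance finset
  have hfin : (distSet (A : Set (EuclideanSpace ℝ (Fin n)))).Finite := by
    apply Set.Finite.subset ((A ×ˢ A).finite_toSet.image fun p => dist p.1 p.2)
    rintro d ⟨p, hp, q', hq', hne, rfl⟩
    exact ⟨(p, q'), by simp [Finset.mem_coe.mp hp, Finset.mem_coe.mp hq'], rfl⟩
  set D : Finset ℝ := hfin.toFinset with hDdef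
  have hDcard : D.card ≤ s := by
    rw [hDdef, ← Set.ncard_eq_toFinset_card _ hfin]; exact hA
  have hDpos : ∀ d ∈ D, 0 < d := by
    intro d hd
    rw [hDdef, Set.Finite.mem_toFinset] at hd
    obtain ⟨p, hp, q', hq', hne, rfl⟩ := hd
    exact dist_pos.mpr hne
  -- the linear map to monomial coordinates
  let Ψ : (↥A → ℝ) →ₗ[ℝ] (↥S → ℝ) :=
    { toFun := fun c α => ∑ a : ↥A, c a * mon (fun i => ((α : Fin n → Fin q) i : ℕ)) ↑a
      map_add' := by
        intro c c'; funext α; simp [add_mul, Finset.sum_add_distrib]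
      map_smul' := by
        intro r c; funext α; simp [Finset.mul_sum, mul_assoc] }
  have hinj : Function.Injective Ψ := by
    rw [injective_iff_map_eq_zero]
    intro c hc0
    have hc : ∀ α : Fin n → Fin q, (∑ i, (α i : ℕ)) ≤ s →
        ∑ a : ↥A, c a * mon (fun i => (α i : ℕ)) ↑a = 0 := by
      intro α hα
      have hmem : α ∈ S := by simp [hS, hα]
      have := congrFun hc0 ⟨α, hmem⟩
      simpa [Ψ] using this
    -- evaluation kills everything in `Rk n k` for `k ≤ s`
    have hev : ∀ k, k ≤ s → ∀ f ∈ Rk n k, (∑ a : ↥A, c a * f ↑a) = 0 := by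
      intro k hk f hf
      induction hf using Submodule.span_induction with
      | mem f hf =>
        obtain ⟨β, hβ, rfl⟩ := hf
        exact ev_mon_eq_zero hq T hT A hbox c hc (∑ i, β i) β (hβ.trans hk) le_rfl
      | zero => simp
      | add f g _ _ h1 h2 =>
        simp only [Pi.add_apply, mul_add, Finset.sum_add_distrib, h1, h2, add_zero]
      | smul t f _ h1 =>
        simp only [Pi.smul_apply, smul_eq_mul]
        calc ∑ a : ↥A, c a * (t * f ↑a) = t * ∑ a : ↥A, c a * f ↑a := by
              rw [Finset.mul_sum]
              exact Finset.sum_congr rfl fun _ _ => by ring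
          _ = 0 := by rw [h1, mul_zero]
    -- the quadratic form kills everything in `Hk n s`
    have hΛ : ∀ F ∈ Hk n s, (∑ a : ↥A, ∑ b : ↥A, c a * c b * F ↑a ↑b) = 0 := by
      intro F hF
      induction hF using Submodule.span_induction with
      | mem F hF =>
        obtain ⟨δ, p, r, hδ, rfl⟩ := hF
        have hfg : ∀ p' r' : ℕ, ((∑ i, δ i) + 2 * p' ≤ s ∨ (∑ i, δ i) + 2 * r' ≤ s) →
            (∑ a : ↥A, ∑ b : ↥A, c a * c b *
              ((mon δ a.1 * uu a.1 ^ p') * (mon δ b.1 * uu b.1 ^ r'))) = 0 := by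
          intro p' r' hps
          have hmemf : ∀ m : ℕ, (mon δ * uu ^ m : E n → ℝ) ∈ Rk n ((∑ i, δ i) + 2 * m) :=
            fun m => Rk_mul (mon_mem_Rk le_rfl) (uu_pow_mem m)
          have hval : ∀ m : ℕ, (∑ i, δ i) + 2 * m ≤ s →
              (∑ a : ↥A, c a * (mon δ a.1 * uu a.1 ^ m)) = 0 := by
            intro m hm
            have := hev _ hm _ (hmemf m)
            simpa using this
          have hprod : (∑ a : ↥A, ∑ b : ↥A, c a * c b *
              ((mon δ a.1 * uu a.1 ^ p') * (mon δ b.1 * uu b.1 ^ r')))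
              = (∑ a : ↥A, c a * (mon δ a.1 * uu a.1 ^ p'))
                * (∑ b : ↥A, c b * (mon δ b.1 * uu b.1 ^ r')) := by
            rw [Finset.sum_mul_sum]
            exact Finset.sum_congr rfl fun a _ =>
              Finset.sum_congr rfl fun b _ => by ring
          rcases hps with hps | hps
          · rw [hprod, hval p' hps, zero_mul]
          · rw [hprod, hval r' hps, mul_zero]
        have hsplit : (∑ a : ↥A, ∑ b : ↥A, c a * c b * gen δ p r a.1 b.1)
            = (∑ a : ↥A, ∑ b : ↥A, c a * c b *
                ((mon δ a.1 * uu a.1 ^ p) * (mon δ b.1 * uu b.1 ^ r)))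
              + (∑ a : ↥A, ∑ b : ↥A, c a * c b *
                ((mon δ a.1 * uu a.1 ^ r) * (mon δ b.1 * uu b.1 ^ p))) := by
          rw [← Finset.sum_add_distrib]
          refine Finset.sum_congr rfl fun a _ => ?_
          rw [← Finset.sum_add_distrib]
          refine Finset.sum_congr rfl fun b _ => ?_
          simp only [gen]
          ring
        rw [hsplit]
        rcases le_total p r with hpr | hpr
        · rw [hfg p r (Or.inl (by omega)), hfg r p (Or.inr (by omega)), add_zero]
        · rw [hfg p r (Or.inr (by omega)), hfg r p (Or.inl (by omega)), add_zero]
      | zero => simp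
      | add F G _ _ h1 h2 =>
        simp only [Pi.add_apply, mul_add, Finset.sum_add_distrib, h1, h2, add_zero]
      | smul t F _ h1 =>
        simp only [Pi.smul_apply, smul_eq_mul]
        calc ∑ a : ↥A, ∑ b : ↥A, c a * c b * (t * F ↑a ↑b)
            = t * ∑ a : ↥A, ∑ b : ↥A, c a * c b * F ↑a ↑b := by
              rw [Finset.mul_sum]
              refine Finset.sum_congr rfl fun a _ => ?_
              rw [Finset.mul_sum]
              exact Finset.sum_congr rfl fun b _ => by ring
          _ = 0 := by rw [h1, mul_zero]
    -- the product kernel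
    have hK : (∏ d ∈ D, (factor d : E n → E n → ℝ)) ∈ Hk n s :=
      Hk_mono hDcard (prod_factor_mem D)
    have hΛK := hΛ _ hK
    have hKval : ∀ a b : ↥A, (∏ d ∈ D, (factor d : E n → E n → ℝ)) ↑a ↑b
        = ∏ d ∈ D, (d ^ 2 - ∑ i, ((↑a : EuclideanSpace ℝ (Fin n)) i
            - (↑b : EuclideanSpace ℝ (Fin n)) i) ^ 2) := by
      intro a b
      simp only [Finset.prod_apply]
      rfl
    have hdistsq : ∀ a b : ↥A,
        dist (↑a : EuclideanSpace ℝ (Fin n)) ↑b ^ 2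
          = ∑ i, ((↑a : EuclideanSpace ℝ (Fin n)) i
            - (↑b : EuclideanSpace ℝ (Fin n)) i) ^ 2 := by
      intro a b
      rw [EuclideanSpace.dist_eq, Real.sq_sqrt (Finset.sum_nonneg fun i _ => sq_nonneg _)]
      exact Finset.sum_congr rfl fun i _ => by rw [Real.dist_eq, sq_abs]
    have hdiag : (∑ a : ↥A, ∑ b : ↥A, c a * c b
          * (∏ d ∈ D, (factor d : E n → E n → ℝ)) ↑a ↑b)
        = (∑ a : ↥A, c a * c a) * ∏ d ∈ D, d ^ 2 := by
      rw [Finset.sum_mul]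
      refine Finset.sum_congr rfl fun a _ => ?_
      rw [Finset.sum_eq_single a]
      · rw [hKval a a]
        simp [mul_assoc]
      · intro b _ hba
        have hne : (↑a : EuclideanSpace ℝ (Fin n)) ≠ ↑b :=
          fun h => hba (Subtype.ext h.symm)
        have hdmem : dist (↑a : EuclideanSpace ℝ (Fin n)) ↑b ∈ D := by
          rw [hDdef, Set.Finite.mem_toFinset]
          exact ⟨↑a, Finset.mem_coe.mpr a.2, ↑b, Finset.mem_coe.mpr b.2, hne, rfl⟩
        rw [hKval a b, Finset.prod_eq_zero hdmem (by rw [← hdistsq a b]; ring), mul_zero]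
      · intro h
        exact absurd (Finset.mem_univ a) h
    rw [hdiag] at hΛK
    have hPd : 0 < ∏ d ∈ D, d ^ 2 :=
      Finset.prod_pos fun d hd => pow_pos (hDpos d hd) 2
    have hsum0 : ∑ a : ↥A, c a * c a = 0 := by
      rcases mul_eq_zero.mp hΛK with h | h
      · exact h
      · exact absurd h hPd.ne'
    have hzero : ∀ a : ↥A, c a * c a = 0 := fun a =>
      (Finset.sum_eq_zero_iff_of_nonneg fun a _ => mul_self_nonneg (c a)).mp hsum0 a
        (Finset.mem_univ a)
    funext a
    exact mul_self_eq_zero.mp (hzero a)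
  have hfr := LinearMap.finrank_le_finrank_of_injective hinj
  rwa [Module.finrank_fintype_fun_eq_card, Module.finrank_fintype_fun_eq_card,
    Fintype.card_coe, Fintype.card_coe] at hfr
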